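/- (Tableau criterion, one direction for a concrete family) Let n ≥ 4 and v(n-2) ∈ S_n be given in one-line notation by [n-2, n-3, n, n-1, n-4, n-5, …, 1] (i.e., v(n-2)(1)=n-2, v(n-2)(2)=n-3, v(n-2)(3)=n, v(n-2)(4)=n-1, and v(n-2)(i)=n+1-i for 5 ≤ i ≤ n). Then for u ∈ S_n, u ≤ v(n-2) in Bruhat order if and only if {u(1), u(2)} ∩ {n-1, n} = ∅. -/

import Mathlib

lemma cardA {n : ℕ} (u : Equiv.Perm (Fin n)) (q k : Fin n) :
    (Finset.univ.filter fun i => i ≤ q ∧ k ≤ u i).card ≤ (q : ℕ) + 1 := by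
  calc (Finset.univ.filter fun i => i ≤ q ∧ k ≤ u i).card
      ≤ (Finset.Iic q).card := by
        apply Finset.card_le_card
        intro i hi
        simp only [Finset.mem_filter] at hi
        simpa using hi.2.1
    _ = (q : ℕ) + 1 := Fin.card_Iic q

lemma cardB {n : ℕ} (u : Equiv.Perm (Fin n)) (q k : Fin n) :
    (Finset.univ.filter fun i => i ≤ q ∧ k ≤ u i).card ≤ n - (k : ℕ) := by
  have h : (Finset.univ.filter fun i => i ≤ q ∧ k ≤ u i).card ≤ (Finset.Ici k).card := by
    apply Finset.card_le_card_of_injOn u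
    · intro i hi
      simp only [Finset.mem_coe, Finset.mem_filter] at hi
      simpa using hi.2.2
    · exact u.injective.injOn
  simpa [Fin.card_Ici] using h

/-- Bruhat order on `Sₙ`, via the tableau criterion: `u ≤ w` iff for every `q` and
every threshold `k`, the number of positions `i ≤ q` with `u i ≥ k` is at most the
corresponding number for `w`. -/
def bruhatLE {n : ℕ} (u w : Equiv.Perm (Fin n)) : Prop :=
  ∀ q k : Fin n,
    (Finset.univ.filter fun i => i ≤ q ∧ k ≤ u i).card ≤
      (Finset.univ.filter fun i => i ≤ q ∧ k ≤ w i).card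

theorem stmt_17 (n : ℕ) (hn : 4 ≤ n) (v : Equiv.Perm (Fin n))
    (hv : ∀ i : Fin n, (v i : ℕ) =
      if (i : ℕ) = 0 then n - 3
      else if (i : ℕ) = 1 then n - 4
      else if (i : ℕ) = 2 then n - 1
      else if (i : ℕ) = 3 then n - 2
      else n - 1 - (i : ℕ)) :
    ∀ u : Equiv.Perm (Fin n),
      bruhatLE u v ↔
        ((u ⟨0, by omega⟩ : ℕ) ≠ n - 2 ∧ (u ⟨0, by omega⟩ : ℕ) ≠ n - 1 ∧
          (u ⟨1, by omega⟩ : ℕ) ≠ n - 2 ∧ (u ⟨1, by omega⟩ : ℕ) ≠ n - 1) := by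
  intro u
  have hv0 : (v ⟨0, by omega⟩ : ℕ) = n - 3 := by simpa using hv ⟨0, by omega⟩
  have hv1 : (v ⟨1, by omega⟩ : ℕ) = n - 4 := by simpa using hv ⟨1, by omega⟩
  have hv2 : (v ⟨2, by omega⟩ : ℕ) = n - 1 := by simpa using hv ⟨2, by omega⟩
  constructor
  · -- forward direction
    intro h
    have hq1 : 1 < n := by omega
    have hk2 : n - 2 < n := by omega
    have key := h ⟨1, hq1⟩ ⟨n - 2, hk2⟩
    have hempty : (Finset.univ.filter fun i => i ≤ (⟨1, hq1⟩ : Fin n) ∧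
        (⟨n - 2, hk2⟩ : Fin n) ≤ v i) = ∅ := by
      rw [Finset.filter_eq_empty_iff]
      rintro i - ⟨hi1, hi2⟩
      rw [Fin.le_def] at hi1 hi2
      simp only at hi1 hi2
      have hvi := hv i
      have hi0 : (i : ℕ) = 0 ∨ (i : ℕ) = 1 := by omega
      rcases hi0 with h' | h' <;> rw [h'] at hvi <;> simp at hvi <;> omega
    rw [hempty, Finset.card_empty, Nat.le_zero, Finset.card_eq_zero,
      Finset.filter_eq_empty_iff] at key
    have k0 := key (Finset.mem_univ (⟨0, by omega⟩ : Fin n))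
    have k1 := key (Finset.mem_univ (⟨1, hq1⟩ : Fin n))
    have h0 : ((u ⟨0, by omega⟩ : Fin n) : ℕ) < n - 2 := by
      by_contra hc
      exact k0 ⟨Fin.mk_le_mk.mpr (by omega), Fin.mk_le_of_le_val (by omega)⟩
    have h1 : ((u ⟨1, by omega⟩ : Fin n) : ℕ) < n - 2 := by
      by_contra hc
      exact k1 ⟨Fin.mk_le_mk.mpr (by omega), Fin.mk_le_of_le_val (by omega)⟩
    exact ⟨by omega, by omega, by omega, by omega⟩
  · -- backward direction
    rintro ⟨h0, h1, h2, h3⟩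
    have p0 : 0 < n := by omega
    have p1 : 1 < n := by omega
    have p2 : 2 < n := by omega
    have e0 : ((⟨0, p0⟩ : Fin n) : ℕ) = 0 := rfl
    have e1 : ((⟨1, p1⟩ : Fin n) : ℕ) = 1 := rfl
    have e2 : ((⟨2, p2⟩ : Fin n) : ℕ) = 2 := rfl
    have ha : ((u ⟨0, p0⟩ : Fin n) : ℕ) ≤ n - 3 := by
      have := (u ⟨0, p0⟩).is_lt; omega
    have hb : ((u ⟨1, p1⟩ : Fin n) : ℕ) ≤ n - 3 := by
      have := (u ⟨1, p1⟩).is_lt; omega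
    have hub : ∀ i : Fin n, (i : ℕ) ≤ 1 → ((u i : Fin n) : ℕ) ≤ n - 3 := by
      intro i hi
      rcases Nat.le_one_iff_eq_zero_or_eq_one.mp hi with h' | h'
      · have he : i = ⟨0, p0⟩ := Fin.ext h'
        rw [he]; exact ha
      · have he : i = ⟨1, p1⟩ := Fin.ext h'
        rw [he]; exact hb
    intro q k
    -- at most one position i ≤ 1 carries a value ≥ n-3
    have hone : (k : ℕ) = n - 3 →
        ∀ q' : Fin n, (q' : ℕ) ≤ 1 →
        (Finset.univ.filter fun i => i ≤ q' ∧ k ≤ u i).card ≤ 1 := by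
      intro hk q' hq'
      apply Finset.card_le_one.mpr
      intro a ha' b hb'
      simp only [Finset.mem_filter, Finset.mem_univ, true_and] at ha' hb'
      obtain ⟨ha1, ha2⟩ := ha'
      obtain ⟨hb1, hb2⟩ := hb'
      rw [Fin.le_def] at ha1 hb1 ha2 hb2
      have hA := hub a (by omega)
      have hB := hub b (by omega)
      have : u a = u b := Fin.ext (by omega)
      exact u.injective this
    rcases Nat.lt_or_ge (q : ℕ) 3 with hq | hq
    · -- small q : 0, 1, 2
      have h012 : (q : ℕ) = 0 ∨ (q : ℕ) = 1 ∨ (q : ℕ) = 2 := by omega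
      rcases h012 with hq3 | hq3 | hq3
      · -- q = 0
        rcases le_or_gt (k : ℕ) (n - 3) with hk | hk
        · have hA := cardA u q k
          have hsub : ({⟨0, p0⟩} : Finset (Fin n)) ⊆
              Finset.univ.filter fun i => i ≤ q ∧ k ≤ v i := by
            simp only [Finset.singleton_subset_iff, Finset.mem_filter, Finset.mem_univ, true_and]
            exact ⟨Fin.mk_le_of_le_val (by omega), by rw [Fin.le_def, hv0]; omega⟩
          have hc := Finset.card_le_card hsub
          rw [Finset.card_singleton] at hc
          omega
        · have hE : (Finset.univ.filter fun i => i ≤ q ∧ k ≤ u i) = ∅ := by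
            rw [Finset.filter_eq_empty_iff]
            rintro i - ⟨hi1, hi2⟩
            rw [Fin.le_def] at hi1 hi2
            have := hub i (by omega)
            omega
          rw [hE]
          simp
      · -- q = 1
        rcases Nat.lt_or_ge (n - 4) (k : ℕ) with hk | hk
        · rcases le_or_gt (k : ℕ) (n - 3) with hk' | hk'
          · -- k = n - 3
            have hc1 := hone (by omega) q (by omega)
            have hsub : ({⟨0, p0⟩} : Finset (Fin n)) ⊆
                Finset.univ.filter fun i => i ≤ q ∧ k ≤ v i := by
              simp only [Finset.singleton_subset_iff, Finset.mem_filter, Finset.mem_univ, true_and]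
              exact ⟨Fin.mk_le_of_le_val (by omega), by rw [Fin.le_def, hv0]; omega⟩
            have hc := Finset.card_le_card hsub
            rw [Finset.card_singleton] at hc
            omega
          · -- k ≥ n - 2
            have hE : (Finset.univ.filter fun i => i ≤ q ∧ k ≤ u i) = ∅ := by
              rw [Finset.filter_eq_empty_iff]
              rintro i - ⟨hi1, hi2⟩
              rw [Fin.le_def] at hi1 hi2
              have := hub i (by omega)
              omega
            rw [hE]
            simp
        · -- k ≤ n - 4
          have hA := cardA u q k
          have hsub : ({⟨0, p0⟩, ⟨1, p1⟩} : Finset (Fin n)) ⊆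
              Finset.univ.filter fun i => i ≤ q ∧ k ≤ v i := by
            intro i hi
            simp only [Finset.mem_insert, Finset.mem_singleton] at hi
            simp only [Finset.mem_filter, Finset.mem_univ, true_and]
            rcases hi with rfl | rfl
            · exact ⟨Fin.mk_le_of_le_val (by omega), by rw [Fin.le_def, hv0]; omega⟩
            · exact ⟨Fin.mk_le_of_le_val (by omega), by rw [Fin.le_def, hv1]; omega⟩
          have hc := Finset.card_le_card hsub
          rw [Finset.card_pair (Fin.ne_of_val_ne (show (0:ℕ) ≠ 1 by omega))] at hc
          omega
      · -- q = 2
        rcases Nat.lt_or_ge (n - 4) (k : ℕ) with hk | hk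
        · rcases le_or_gt (k : ℕ) (n - 3) with hk' | hk'
          · -- k = n - 3 : count_u ≤ 2, count_v ≥ 2
            have hstep : (Finset.univ.filter fun i => i ≤ q ∧ k ≤ u i) ⊆
                insert (⟨2, p2⟩ : Fin n)
                  (Finset.univ.filter fun i => i ≤ (⟨1, p1⟩ : Fin n) ∧ k ≤ u i) := by
              intro i hi
              simp only [Finset.mem_filter, Finset.mem_univ, true_and] at hi
              obtain ⟨hi1, hi2⟩ := hi
              rw [Fin.le_def] at hi1
              simp only [Finset.mem_insert, Finset.mem_filter, Finset.mem_univ, true_and]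
              by_cases h2 : (i : ℕ) = 2
              · exact Or.inl (Fin.ext h2)
              · exact Or.inr ⟨Fin.le_def.mpr (by omega), hi2⟩
            have hc1 := hone (by omega) ⟨1, p1⟩ (by exact Nat.le_refl 1)
            have hcu := Finset.card_le_card hstep
            have hci := Finset.card_insert_le (⟨2, p2⟩ : Fin n)
              (Finset.univ.filter fun i => i ≤ (⟨1, p1⟩ : Fin n) ∧ k ≤ u i)
            have hsub : ({⟨0, p0⟩, ⟨2, p2⟩} : Finset (Fin n)) ⊆
                Finset.univ.filter fun i => i ≤ q ∧ k ≤ v i := by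
              intro i hi
              simp only [Finset.mem_insert, Finset.mem_singleton] at hi
              simp only [Finset.mem_filter, Finset.mem_univ, true_and]
              rcases hi with rfl | rfl
              · exact ⟨Fin.mk_le_of_le_val (by omega), by rw [Fin.le_def, hv0]; omega⟩
              · exact ⟨Fin.mk_le_of_le_val (by omega), by rw [Fin.le_def, hv2]; omega⟩
            have hc := Finset.card_le_card hsub
            rw [Finset.card_pair (Fin.ne_of_val_ne (show (0:ℕ) ≠ 2 by omega))] at hc
            omega
          · -- k ≥ n - 2 : count_u ≤ 1, count_v ≥ 1
            have hcu : (Finset.univ.filter fun i => i ≤ q ∧ k ≤ u i) ⊆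
                ({⟨2, p2⟩} : Finset (Fin n)) := by
              intro i hi
              simp only [Finset.mem_filter, Finset.mem_univ, true_and] at hi
              obtain ⟨hi1, hi2⟩ := hi
              rw [Fin.le_def] at hi1 hi2
              simp only [Finset.mem_singleton]
              by_cases h2 : (i : ℕ) ≤ 1
              · have := hub i h2; omega
              · exact Fin.ext (by omega)
            have hcu' := Finset.card_le_card hcu
            rw [Finset.card_singleton] at hcu'
            have hsub : ({⟨2, p2⟩} : Finset (Fin n)) ⊆
                Finset.univ.filter fun i => i ≤ q ∧ k ≤ v i := by
              simp only [Finset.singleton_subset_iff, Finset.mem_filter, Finset.mem_univ, true_and]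
              have := k.is_lt
              exact ⟨Fin.mk_le_of_le_val (by omega), by rw [Fin.le_def, hv2]; omega⟩
            have hc := Finset.card_le_card hsub
            rw [Finset.card_singleton] at hc
            omega
        · -- k ≤ n - 4 : count_u ≤ 3, count_v ≥ 3
          have hA := cardA u q k
          have hsub : ({⟨0, p0⟩, ⟨1, p1⟩, ⟨2, p2⟩} : Finset (Fin n)) ⊆
              Finset.univ.filter fun i => i ≤ q ∧ k ≤ v i := by
            intro i hi
            simp only [Finset.mem_insert, Finset.mem_singleton] at hi
            simp only [Finset.mem_filter, Finset.mem_univ, true_and]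
            rcases hi with rfl | rfl | rfl
            · exact ⟨Fin.mk_le_of_le_val (by omega), by rw [Fin.le_def, hv0]; omega⟩
            · exact ⟨Fin.mk_le_of_le_val (by omega), by rw [Fin.le_def, hv1]; omega⟩
            · exact ⟨Fin.mk_le_of_le_val (by omega), by rw [Fin.le_def, hv2]; omega⟩
          have hc := Finset.card_le_card hsub
          have h3card : ({⟨0, p0⟩, ⟨1, p1⟩, ⟨2, p2⟩} : Finset (Fin n)).card = 3 := by
            rw [Finset.card_insert_of_notMem (by
              simp only [Finset.mem_insert, Finset.mem_singleton]
              push_neg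
              exact ⟨Fin.ne_of_val_ne (show (0:ℕ) ≠ 1 by omega),
                Fin.ne_of_val_ne (show (0:ℕ) ≠ 2 by omega)⟩),
              Finset.card_pair (Fin.ne_of_val_ne (show (1:ℕ) ≠ 2 by omega))]
          rw [h3card] at hc
          omega
    · -- q ≥ 3
      rcases Nat.lt_or_ge ((k : ℕ) + (q : ℕ) + 1) n with hcase | hcase
      · -- k small: every i ≤ q is in the filter for v
        have hsub : Finset.Iic q ⊆ Finset.univ.filter fun i => i ≤ q ∧ k ≤ v i := by
          intro i hi
          rw [Finset.mem_Iic] at hi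
          simp only [Finset.mem_filter, Finset.mem_univ, true_and]
          refine ⟨hi, ?_⟩
          have hiq : (i : ℕ) ≤ (q : ℕ) := Fin.le_def.mp hi
          rw [Fin.le_def]
          have hvi := hv i
          have := i.is_lt
          split_ifs at hvi <;> omega
        have hc := Finset.card_le_card hsub
        rw [Fin.card_Iic] at hc
        have hA := cardA u q k
        omega
      · -- k large: inject Ici k into the filter for v via v.symm
        have hsub : (Finset.Ici k).card ≤
            (Finset.univ.filter fun i => i ≤ q ∧ k ≤ v i).card := by
          apply Finset.card_le_card_of_injOn (fun j => v.symm j)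
          · intro j hj
            rw [Finset.mem_coe, Finset.mem_Ici] at hj
            have hjk : (k : ℕ) ≤ (j : ℕ) := Fin.le_def.mp hj
            simp only [Finset.mem_coe, Finset.mem_filter, Finset.mem_univ, true_and]
            have hvj : v (v.symm j) = j := v.apply_symm_apply j
            constructor
            · rw [Fin.le_def]
              by_contra hc
              push_neg at hc
              have hvi := hv (v.symm j)
              rw [hvj] at hvi
              have := (v.symm j).is_lt
              have := j.is_lt
              split_ifs at hvi <;> omega
            · rw [hvj]; exact hj
          · exact fun a _ b _ hab => v.symm.injective hab
        rw [Fin.card_Ici] at hsub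
        have hB := cardB u q k
        omega
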